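/- Let A be an n×n real matrix whose characteristic polynomial is λⁿ + a₁λ^{n−1} + ⋯ + aₙ, let Ψ, Φ be as defined, and let b ∈ ℝⁿ. Then eₙᵀ ΨΦ b = (−1)^{n+1} e₁ᵀ adj(A) b; that is, the quantity s = eₙᵀ Q b (with Q = ΨΦ) satisfies s = (−1)^{n+1} ρᵀ b where ρᵀ = e₁ᵀ adj(A). -/

import Mathlib

open Matrix Polynomial

set_option maxHeartbeats 1000000

/-- The `n×n` companion matrix with first column `(−a₁,…,−aₙ)ᵀ` and
superdiagonal ones (`a i` encodes `a_{i+1}`). -/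
def compC {n : ℕ} (a : Fin (n + 1) → ℝ) : Matrix (Fin (n + 1)) (Fin (n + 1)) ℝ :=
  Matrix.of fun i j =>
    if (j : ℕ) = 0 then -a i else if (j : ℕ) = (i : ℕ) + 1 then 1 else 0

/-- The lower-triangular matrix `Ψ` with unit diagonal and `Ψ_{ij} = a_{i−j}`
for `i > j`. -/
def psiM {n : ℕ} (a : Fin (n + 1) → ℝ) : Matrix (Fin (n + 1)) (Fin (n + 1)) ℝ :=
  Matrix.of fun i j =>
    if (i : ℕ) = (j : ℕ) then 1
    else if (j : ℕ) < (i : ℕ) then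
      a ⟨(i : ℕ) - (j : ℕ) - 1,
        lt_of_le_of_lt (le_trans (Nat.sub_le _ _) (Nat.sub_le _ _)) i.isLt⟩
    else 0

/-- The observability matrix `Φ` whose `i`-th row is `e₁ᵀ A^{i−1}`. -/
noncomputable def phiM {n : ℕ} (A : Matrix (Fin (n + 1)) (Fin (n + 1)) ℝ) :
    Matrix (Fin (n + 1)) (Fin (n + 1)) ℝ :=
  Matrix.of fun i j => (A ^ (i : ℕ)) 0 j

/-- The nilpotent shift matrix `J` with superdiagonal ones. -/
def shiftJ (n : ℕ) : Matrix (Fin (n + 1)) (Fin (n + 1)) ℝ :=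
  Matrix.of fun i j => if (j : ℕ) = (i : ℕ) + 1 then 1 else 0

/-- `s = eₙᵀ ΨΦ b = (−1)^{n+1} ρᵀ b`, where `ρᵀ = e₁ᵀ adj(A)`
(here the matrices have size `n + 1`, so the exponent is `(n + 1) + 1`). -/
lemma adjugate_eq_poly (m : ℕ) (M : Matrix (Fin (m+1)) (Fin (m+1)) ℝ) :
    M.adjugate = (-1:ℝ)^m • ∑ i ∈ Finset.range (m+1), M.charpoly.coeff (i+1) • M^i := by
  classical
  set p := M.charpoly with hp
  set c : ℕ → ℝ := fun k => p.coeff k with hc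
  set B : ℕ → Matrix (Fin (m+1)) (Fin (m+1)) ℝ :=
    fun k => ∑ i ∈ Finset.range (m+1-k), c (k+1+i) • M^i with hB
  have hmonic : p.Monic := M.charpoly_monic
  have hdeg : p.natDegree = m + 1 := by
    rw [hp, charpoly_natDegree_eq_dim]; exact Fintype.card_fin _
  have hctop : c (m+1) = 1 := by
    have := hmonic.coeff_natDegree
    rwa [hdeg] at this
  have hBtop : B m = 1 := by
    simp [hB, hctop]
  have hsum : ∑ i ∈ Finset.range (m+2), c i • M^i = 0 := by
    have h := M.aeval_self_charpoly
    rw [aeval_eq_sum_range] at h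
    rw [← hp, hdeg] at h
    exact h
  have hB0 : M * B 0 = -(c 0 • (1 : Matrix (Fin (m+1)) (Fin (m+1)) ℝ)) := by
    have hL : M * B 0 = ∑ i ∈ Finset.range (m+1), c (i+1) • M^(i+1) := by
      simp only [hB]
      simp only [Nat.sub_zero, Finset.mul_sum]
      refine Finset.sum_congr rfl fun i _ => ?_
      rw [mul_smul_comm, ← pow_succ']
      ring_nf
    have h2 := Finset.sum_range_succ' (fun i => c i • M^i) (m+1)
    rw [hsum] at h2
    have h3 : (∑ i ∈ Finset.range (m+1), c (i+1) • M^(i+1)) = -(c 0 • M^0) :=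
      eq_neg_of_add_eq_zero_left h2.symm
    rw [hL, h3, pow_zero]
  have hBk : ∀ k, k < m → M * B (k+1) + c (k+1) • 1 = B k := by
    intro k hk
    have hL : M * B (k+1) = ∑ i ∈ Finset.range (m-k), c (k+1+(i+1)) • M^(i+1) := by
      simp only [hB]
      have h1 : m + 1 - (k+1) = m - k := by omega
      rw [h1, Finset.mul_sum]
      refine Finset.sum_congr rfl fun i _ => ?_
      rw [mul_smul_comm, ← pow_succ']
      ring_nf
    have hR : B k = ∑ i ∈ Finset.range (m-k), c (k+1+(i+1)) • M^(i+1) + c (k+1) • 1 := by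
      simp only [hB]
      have h1 : m + 1 - k = (m - k) + 1 := by omega
      rw [h1, Finset.sum_range_succ' (fun i => c (k+1+i) • M^i) (m-k)]
      simp
    rw [hL, hR]
  set D : Matrix (Fin (m+1)) (Fin (m+1)) ℝ[X] :=
    ∑ k ∈ Finset.range (m+1), (X:ℝ[X])^k • (B k).map C with hD
  have hmap_smul : ∀ (r : ℝ) (N : Matrix (Fin (m+1)) (Fin (m+1)) ℝ),
      (r • N).map (Polynomial.C : ℝ → ℝ[X]) = Polynomial.C r • N.map Polynomial.C := by
    intro r N; ext i j; simp [Matrix.map_apply]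
  have hmap_one : (1 : Matrix (Fin (m+1)) (Fin (m+1)) ℝ).map (Polynomial.C : ℝ → ℝ[X]) = 1 := by
    ext i j; simp [Matrix.map_apply, Matrix.one_apply, apply_ite]
  have hmap_sub : ∀ (N N' : Matrix (Fin (m+1)) (Fin (m+1)) ℝ),
      (N - N').map (Polynomial.C : ℝ → ℝ[X]) = N.map Polynomial.C - N'.map Polynomial.C := by
    intro N N'; ext i j; simp [Matrix.map_apply]
  have hcharm : charmatrix M
      = (X:ℝ[X]) • (1 : Matrix (Fin (m+1)) (Fin (m+1)) ℝ[X]) - M.map (Polynomial.C : ℝ → ℝ[X]) := by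
    ext i j
    by_cases h : i = j
    · subst h
      simp [charmatrix_apply_eq, Matrix.smul_apply, Matrix.one_apply, Matrix.map_apply]
    · simp [charmatrix_apply_ne _ _ _ h, Matrix.smul_apply, Matrix.one_apply, h, Matrix.map_apply]
  have hprod : charmatrix M * D = p • (1 : Matrix (Fin (m+1)) (Fin (m+1)) ℝ[X]) := by
    rw [hcharm, sub_mul, smul_mul_assoc, one_mul]
    have hXD : (X:ℝ[X]) • D = ∑ k ∈ Finset.range (m+1), (X:ℝ[X])^(k+1) • (B k).map Polynomial.C := by
      rw [hD, Finset.smul_sum]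
      refine Finset.sum_congr rfl fun k _ => ?_
      rw [smul_smul, ← pow_succ']
    have hMD : M.map (Polynomial.C : ℝ → ℝ[X]) * D
        = ∑ k ∈ Finset.range (m+1), (X:ℝ[X])^k • (M * B k).map Polynomial.C := by
      rw [hD, Finset.mul_sum]
      refine Finset.sum_congr rfl fun k _ => ?_
      rw [mul_smul_comm, ← Matrix.map_mul]
    rw [hXD, hMD]
    rw [Finset.sum_range_succ (fun k => (X:ℝ[X])^(k+1) • (B k).map Polynomial.C) m,
        Finset.sum_range_succ' (fun k => (X:ℝ[X])^k • (M * B k).map Polynomial.C) m]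
    have hps : p = ∑ k ∈ Finset.range (m+2), Polynomial.C (c k) * X^k := by
      conv_lhs => rw [p.as_sum_range' (m+2) (by omega)]
      simp [Polynomial.C_mul_X_pow_eq_monomial]
      rfl
    have hRHS : p • (1 : Matrix (Fin (m+1)) (Fin (m+1)) ℝ[X])
        = (∑ k ∈ Finset.range m,
            (Polynomial.C (c (k+1)) * X^(k+1)) • (1 : Matrix (Fin (m+1)) (Fin (m+1)) ℝ[X]))
          + (X:ℝ[X])^(m+1) • 1 + Polynomial.C (c 0) • 1 := by
      rw [hps, Finset.sum_smul,
        Finset.sum_range_succ'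
          (fun k => (Polynomial.C (c k) * X^k) • (1 : Matrix (Fin (m+1)) (Fin (m+1)) ℝ[X])) (m+1),
        Finset.sum_range_succ
          (fun k => (Polynomial.C (c (k+1)) * X^(k+1)) • (1 : Matrix (Fin (m+1)) (Fin (m+1)) ℝ[X])) m]
      rw [hctop]
      simp [add_assoc]
    rw [hRHS, hBtop, hmap_one, hB0]
    have hterm : ∀ k ∈ Finset.range m,
        ((X:ℝ[X])^(k+1) • (B k).map Polynomial.C) - ((X:ℝ[X])^(k+1) • (M * B (k+1)).map Polynomial.C)
          = (Polynomial.C (c (k+1)) * X^(k+1)) • (1 : Matrix (Fin (m+1)) (Fin (m+1)) ℝ[X]) := by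
      intro k hk
      rw [← smul_sub, ← hmap_sub]
      have h1 : B k - M * B (k+1) = c (k+1) • 1 := by
        rw [← hBk k (Finset.mem_range.mp hk)]
        abel
      rw [h1, hmap_smul, hmap_one, smul_smul, mul_comm]
    have hsub : ∑ k ∈ Finset.range m,
        (Polynomial.C (c (k+1)) * X^(k+1)) • (1 : Matrix (Fin (m+1)) (Fin (m+1)) ℝ[X])
        = (∑ k ∈ Finset.range m, (X:ℝ[X])^(k+1) • (B k).map Polynomial.C)
          - ∑ k ∈ Finset.range m, (X:ℝ[X])^(k+1) • (M * B (k+1)).map Polynomial.C := by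
      rw [← Finset.sum_sub_distrib]
      exact (Finset.sum_congr rfl hterm).symm
    rw [hsub]
    have hneg : ((-(c 0 • (1 : Matrix (Fin (m+1)) (Fin (m+1)) ℝ))).map (Polynomial.C : ℝ → ℝ[X]))
        = -(Polynomial.C (c 0) • 1) := by
      ext i j; simp [Matrix.map_apply, Matrix.one_apply, apply_ite]
    rw [hneg, pow_zero, one_smul]
    abel
  have hadjD : (charmatrix M).adjugate = D := by
    have hdet : (charmatrix M).det = p := rfl
    have h1 : charmatrix M * (charmatrix M).adjugate = p • 1 := by
      rw [Matrix.mul_adjugate, hdet]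
    have h2 : charmatrix M * ((charmatrix M).adjugate - D) = 0 := by
      rw [mul_sub, h1, hprod, sub_self]
    have h3 : p • ((charmatrix M).adjugate - D) = 0 := by
      have h4 := congrArg (fun Y => (charmatrix M).adjugate * Y) h2
      simp only [mul_zero] at h4
      rw [← mul_assoc, Matrix.adjugate_mul, hdet, smul_mul_assoc, one_mul] at h4
      exact h4
    have hpne : p ≠ 0 := hmonic.ne_zero
    have h5 : (charmatrix M).adjugate - D = 0 := by
      ext i j
      have h6 : (p • ((charmatrix M).adjugate - D)) i j = 0 := by rw [h3]; simp
      rw [Matrix.smul_apply, smul_eq_mul] at h6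
      have := mul_eq_zero.mp h6
      simp only [Matrix.zero_apply]
      tauto
    rw [← sub_eq_zero]
    exact h5
  -- evaluate at 0
  have hev := congrArg (fun N => (Polynomial.evalRingHom (0:ℝ)).mapMatrix N) hadjD
  rw [RingHom.map_adjugate] at hev
  have hevCharm : (Polynomial.evalRingHom (0:ℝ)).mapMatrix (charmatrix M) = -M := by
    ext i j
    by_cases h : i = j
    · subst h; simp [RingHom.mapMatrix_apply, Matrix.map_apply, charmatrix_apply_eq]
    · simp [RingHom.mapMatrix_apply, Matrix.map_apply, charmatrix_apply_ne _ _ _ h, h]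
  have hevD : (Polynomial.evalRingHom (0:ℝ)).mapMatrix D = B 0 := by
    ext i j
    rw [RingHom.mapMatrix_apply, Matrix.map_apply]
    have h1 : D i j = ∑ k ∈ Finset.range (m+1), (X:ℝ[X])^k * Polynomial.C (B k i j) := by
      rw [hD, Matrix.sum_apply]
      refine Finset.sum_congr rfl fun k _ => ?_
      simp [Matrix.smul_apply, Matrix.map_apply, smul_eq_mul]
    rw [h1]
    simp only [coe_evalRingHom, Polynomial.eval_finset_sum]
    rw [Finset.sum_eq_single 0]
    · simp
    · intro k _ hk
      simp [zero_pow hk]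
    · intro h; exact absurd (Finset.mem_range.mpr (by omega)) h
  rw [hevCharm, hevD] at hev
  have hneg : (-M) = (-1:ℝ) • M := by simp
  rw [hneg, Matrix.adjugate_smul] at hev
  have hcard : (Fintype.card (Fin (m+1)) - 1) = m := by simp
  rw [hcard] at hev
  have hB0' : B 0 = ∑ i ∈ Finset.range (m+1), M.charpoly.coeff (i+1) • M^i := by
    simp only [hB, Nat.sub_zero]
    refine Finset.sum_congr rfl fun i _ => ?_
    have : 0 + 1 + i = i + 1 := by omega
    rw [this]
  rw [← hB0', ← hev, smul_smul]
  have hone : (-1:ℝ)^m * (-1)^m = 1 := by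
    rw [← pow_add]
    exact Even.neg_one_pow ⟨m, by ring⟩
  rw [hone, one_smul]

theorem s_eq_sign_rho_b (n : ℕ) (a : Fin (n + 1) → ℝ)
    (A : Matrix (Fin (n + 1)) (Fin (n + 1)) ℝ) (b : Fin (n + 1) → ℝ)
    (hchar : A.charpoly
      = X ^ (n + 1) + ∑ i : Fin (n + 1), C (a i) * X ^ (n - (i : ℕ))) :
    ((psiM a * phiM A).mulVec b) (Fin.last n)
      = (-1 : ℝ) ^ (n + 1 + 1) * (A.adjugate.mulVec b) 0 := by
  classical
  have hco : ∀ k : ℕ, (hk : k ≤ n) → A.charpoly.coeff k = a ⟨n - k, by omega⟩ := by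
    intro k hk
    rw [hchar, coeff_add, coeff_X_pow, if_neg (by omega), zero_add, Polynomial.finset_sum_coeff]
    rw [Finset.sum_eq_single (⟨n - k, by omega⟩ : Fin (n+1))]
    · simp only [coeff_C_mul, coeff_X_pow]
      rw [if_pos (show k = n - (n - k) by omega)]
      ring
    · intro i _ hi
      simp only [coeff_C_mul, coeff_X_pow]
      rw [if_neg]
      · ring
      · intro h
        exact hi (Fin.ext (by omega : (i:ℕ) = n - k))
    · intro h
      exact absurd (Finset.mem_univ _) h
  have hdeg : A.charpoly.natDegree = n + 1 := by
    rw [charpoly_natDegree_eq_dim]; exact Fintype.card_fin _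
  have hc1 : A.charpoly.coeff (n+1) = 1 := by
    have := A.charpoly_monic.coeff_natDegree
    rwa [hdeg] at this
  set S : Matrix (Fin (n+1)) (Fin (n+1)) ℝ :=
    ∑ k ∈ Finset.range (n+1), A.charpoly.coeff (k+1) • A^k with hS
  have hrow : ∀ k : Fin (n+1), psiM a (Fin.last n) k = A.charpoly.coeff ((k:ℕ)+1) := by
    intro k
    by_cases h : (k:ℕ) = n
    · have : (k:ℕ) + 1 = n + 1 := by omega
      rw [this, hc1]
      simp [psiM, h]
    · have hlt : (k:ℕ) < n := by omega
      rw [hco ((k:ℕ)+1) (by omega)]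
      simp only [psiM, Matrix.of_apply, Fin.val_last]
      rw [if_neg (by omega), if_pos hlt]
      exact congrArg a (Fin.ext (show n - (k:ℕ) - 1 = n - ((k:ℕ)+1) by omega))
  have hrow2 : ∀ j, (psiM a * phiM A) (Fin.last n) j = S 0 j := by
    intro j
    rw [Matrix.mul_apply, hS, Matrix.sum_apply,
      ← Fin.sum_univ_eq_sum_range (fun k => (A.charpoly.coeff (k+1) • A^k) 0 j) (n+1)]
    refine Finset.sum_congr rfl fun k _ => ?_
    rw [hrow k]
    simp [phiM, Matrix.smul_apply, smul_eq_mul]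
  have hadj := adjugate_eq_poly n A
  have hone : (-1:ℝ)^n * (-1)^n = 1 := by
    rw [← pow_add]; exact Even.neg_one_pow ⟨n, by ring⟩
  have hSadj : S = (-1:ℝ)^n • A.adjugate := by
    rw [hadj, smul_smul, hone, one_smul]
  have hb : ∀ j, (psiM a * phiM A) (Fin.last n) j = (-1:ℝ)^n * A.adjugate 0 j := by
    intro j
    rw [hrow2 j, hSadj, Matrix.smul_apply, smul_eq_mul]
  show ∑ j, (psiM a * phiM A) (Fin.last n) j * b j
      = (-1:ℝ)^(n+1+1) * ∑ j, A.adjugate 0 j * b j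
  rw [Finset.mul_sum]
  refine Finset.sum_congr rfl fun j _ => ?_
  rw [hb j]
  have : (-1:ℝ)^(n+1+1) = (-1:ℝ)^n := by
    rw [pow_succ, pow_succ]; ring
  rw [this]; ring
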